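/- Let γ and γ⊥ be orthonormal vectors in ℂ², let θ ∈ ℝ, and set φ = (γ + e^{iθ}γ⊥)/√2 and ψ = (γ + e^{i(θ+π/2)}γ⊥)/√2 (so that φ and ψ are mutually unbiased with ω = π/2). Let φ⊥ be a unit vector orthogonal to φ, let p ∈ [0,1], and set ρ := (1−p)|φ⟩⟨φ| + p|φ⊥⟩⟨φ⊥|. Then the generalized weak values satisfy W_{ρ,ψ}(|γ⟩⟨γ|) = (1/2)(1 + (1−2p)i) and W_{ρ,ψ}(|γ⊥⟩⟨γ⊥|) = (1/2)(1 − (1−2p)i); in particular W_{ρ,ψ}(|γ⊥⟩⟨γ⊥|) is the complex conjugate of W_{ρ,ψ}(|γ⟩⟨γ|). -/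

import Mathlib

noncomputable section

/-- The rank-one projector `|v⟩⟨v|` with entries `v i * conj (v j)`. -/
def proj (v : EuclideanSpace ℂ (Fin 2)) : Matrix (Fin 2) (Fin 2) ℂ :=
  Matrix.of fun i j => v i * star (v j)

/-- Matrix-vector multiplication, valued in `EuclideanSpace ℂ (Fin 2)`. -/
def mulVecE (M : Matrix (Fin 2) (Fin 2) ℂ) (v : EuclideanSpace ℂ (Fin 2)) :
    EuclideanSpace ℂ (Fin 2) :=
  (WithLp.equiv 2 (Fin 2 → ℂ)).symm (M.mulVec ((WithLp.equiv 2 (Fin 2 → ℂ)) v))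

/-- The weak value `W_{φ,ψ}(M) = ⟨ψ, Mφ⟩ / ⟨ψ, φ⟩`. -/
def weak (φ ψ : EuclideanSpace ℂ (Fin 2)) (M : Matrix (Fin 2) (Fin 2) ℂ) : ℂ :=
  (inner ℂ ψ (mulVecE M φ) : ℂ) / (inner ℂ ψ φ : ℂ)

/-- The generalized weak value `W_{ρ,ψ}(M) = Tr(|ψ⟩⟨ψ| M ρ) / Tr(|ψ⟩⟨ψ| ρ)`. -/
def gweak (ρ : Matrix (Fin 2) (Fin 2) ℂ) (ψ : EuclideanSpace ℂ (Fin 2))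
    (M : Matrix (Fin 2) (Fin 2) ℂ) : ℂ :=
  (proj ψ * M * ρ).trace / (proj ψ * ρ).trace

/-- The mixed rank-one operator `|u⟩⟨v|`. -/
def ketbra (u v : EuclideanSpace ℂ (Fin 2)) : Matrix (Fin 2) (Fin 2) ℂ :=
  Matrix.of fun i j => u i * star (v j)

lemma proj_eq (u : EuclideanSpace ℂ (Fin 2)) : proj u = ketbra u u := rfl

lemma inner_eq (u v : EuclideanSpace ℂ (Fin 2)) :
    (inner ℂ u v : ℂ) = star (u 0) * v 0 + star (u 1) * v 1 := by
  simp only [PiLp.inner_apply, RCLike.inner_apply, Fin.sum_univ_two, starRingEnd_apply]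
  ring

lemma ketbra_mul (u v w x : EuclideanSpace ℂ (Fin 2)) :
    ketbra u v * ketbra w x = (inner ℂ v w : ℂ) • ketbra u x := by
  ext i j
  simp only [Matrix.mul_apply, ketbra, Matrix.of_apply, Matrix.smul_apply, smul_eq_mul,
    inner_eq, Fin.sum_univ_two]
  ring

lemma trace_ketbra (u v : EuclideanSpace ℂ (Fin 2)) :
    (ketbra u v).trace = (inner ℂ v u : ℂ) := by
  simp only [Matrix.trace, Matrix.diag, ketbra, Matrix.of_apply, inner_eq, Fin.sum_univ_two]
  ring

lemma trace_two (a b : EuclideanSpace ℂ (Fin 2)) :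
    (proj a * proj b).trace = (inner ℂ a b : ℂ) * (inner ℂ b a : ℂ) := by
  rw [proj_eq, proj_eq, ketbra_mul, Matrix.trace_smul, trace_ketbra, smul_eq_mul]

lemma trace_three (a b c : EuclideanSpace ℂ (Fin 2)) :
    (proj a * proj b * proj c).trace
      = (inner ℂ a b : ℂ) * (inner ℂ b c : ℂ) * (inner ℂ c a : ℂ) := by
  rw [proj_eq, proj_eq, proj_eq, ketbra_mul, Matrix.smul_mul, ketbra_mul, smul_smul,
    Matrix.trace_smul, trace_ketbra, smul_eq_mul]

lemma completeness (u v : EuclideanSpace ℂ (Fin 2)) (hu : (inner ℂ u u : ℂ) = 1)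
    (hv : (inner ℂ v v : ℂ) = 1) (huv : (inner ℂ u v : ℂ) = 0) :
    proj u + proj v = 1 := by
  set U : Matrix (Fin 2) (Fin 2) ℂ := Matrix.of fun i k => if k = 0 then u i else v i with hU
  have hvu : (inner ℂ v u : ℂ) = 0 := by rw [← inner_conj_symm, huv, map_zero]
  rw [inner_eq] at hu hv huv hvu
  have h1 : star U * U = 1 := by
    ext k l
    fin_cases k <;> fin_cases l <;>
      simp only [Matrix.mul_apply, Matrix.star_apply, hU, Matrix.of_apply, Matrix.one_apply,
        Fin.sum_univ_two] <;> simp <;>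
      first
        | exact hu
        | exact hv
        | exact huv
        | exact hvu
  have h2 : U * star U = 1 := mul_eq_one_comm.mp h1
  ext i j
  have := congrFun (congrFun h2 i) j
  simp only [Matrix.mul_apply, Matrix.star_apply, hU, Matrix.of_apply, Fin.sum_univ_two] at this
  simp only [Matrix.add_apply, proj, Matrix.of_apply]
  simpa using this

/-- for mutually unbiased pre- and post-selection (ω = π/2) and
depolarized pre-selection `ρ`, `W_{ρ,ψ}(|γ⟩⟨γ|) = (1/2)(1 + (1-2p)i)` and
`W_{ρ,ψ}(|γ⊥⟩⟨γ⊥|) = (1/2)(1 - (1-2p)i)` is its complex conjugate. -/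
theorem stmt14 (γ γperp : EuclideanSpace ℂ (Fin 2))
    (hγ : ‖γ‖ = 1) (hγp : ‖γperp‖ = 1) (horth : (inner ℂ γ γperp : ℂ) = 0)
    (θ : ℝ)
    (φ ψ : EuclideanSpace ℂ (Fin 2))
    (hφ : φ = (Real.sqrt 2 : ℂ)⁻¹ • (γ + Complex.exp (θ * Complex.I) • γperp))
    (hψ : ψ = (Real.sqrt 2 : ℂ)⁻¹ •
        (γ + Complex.exp ((θ + Real.pi / 2) * Complex.I) • γperp))
    (φperp : EuclideanSpace ℂ (Fin 2))
    (hφperp : ‖φperp‖ = 1) (horth' : (inner ℂ φ φperp : ℂ) = 0)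
    (p : ℝ) (hp : p ∈ Set.Icc (0 : ℝ) 1)
    (ρ : Matrix (Fin 2) (Fin 2) ℂ)
    (hρ : ρ = ((1 - p : ℝ) : ℂ) • proj φ + ((p : ℝ) : ℂ) • proj φperp) :
    gweak ρ ψ (proj γ) = (1 / 2) * (1 + ((1 - 2 * p : ℝ) : ℂ) * Complex.I) ∧
      gweak ρ ψ (proj γperp) = (1 / 2) * (1 - ((1 - 2 * p : ℝ) : ℂ) * Complex.I) ∧
      gweak ρ ψ (proj γperp) = starRingEnd ℂ (gweak ρ ψ (proj γ)) := by
  have hγγ : (inner ℂ γ γ : ℂ) = 1 := by rw [inner_self_eq_norm_sq_to_K, hγ]; norm_num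
  have hpp : (inner ℂ γperp γperp : ℂ) = 1 := by rw [inner_self_eq_norm_sq_to_K, hγp]; norm_num
  have hφpφp : (inner ℂ φperp φperp : ℂ) = 1 := by
    rw [inner_self_eq_norm_sq_to_K, hφperp]; norm_num
  have hpg : (inner ℂ γperp γ : ℂ) = 0 := by rw [← inner_conj_symm, horth, map_zero]
  set s : ℂ := (Real.sqrt 2 : ℂ) with hsdef
  have hs : s * s = 2 := by
    rw [hsdef, ← Complex.ofReal_mul, Real.mul_self_sqrt (by norm_num)]; norm_num
  have hs0 : s ≠ 0 := by
    intro h; rw [h] at hs; simp at hs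
  have hcs : starRingEnd ℂ s = s := by rw [hsdef]; exact Complex.conj_ofReal _
  have hsi : s⁻¹ * s⁻¹ = 1 / 2 := by
    rw [← mul_inv, hs]; norm_num
  set e : ℂ := Complex.exp (θ * Complex.I) with hedef
  set f : ℂ := Complex.exp ((θ + Real.pi / 2) * Complex.I) with hfdef
  have hce : starRingEnd ℂ e * e = 1 := by
    rw [hedef, ← Complex.exp_conj, ← Complex.exp_add]
    simp [Complex.conj_ofReal]
  have hf : f = e * Complex.I := by
    rw [hfdef, hedef, add_mul, Complex.exp_add]
    congr 1
    rw [show ((Real.pi : ℂ) / 2) = ((Real.pi / 2 : ℝ) : ℂ) by push_cast; ring,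
      Complex.exp_mul_I, ← Complex.ofReal_cos, ← Complex.ofReal_sin,
      Real.cos_pi_div_two, Real.sin_pi_div_two]
    simp
  have hcf : starRingEnd ℂ f * f = 1 := by
    rw [hf, map_mul, Complex.conj_I]
    linear_combination hce - (starRingEnd ℂ e * e) * Complex.I_sq
  have hcfe : starRingEnd ℂ f * e = -Complex.I := by
    rw [hf, map_mul, Complex.conj_I]
    linear_combination (-Complex.I) * hce
  -- inner products
  have i1 : (inner ℂ γ φ : ℂ) = s⁻¹ := by
    rw [hφ, inner_smul_right, inner_add_right, inner_smul_right, hγγ, horth]; ring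
  have i2 : (inner ℂ γperp φ : ℂ) = s⁻¹ * e := by
    rw [hφ, inner_smul_right, inner_add_right, inner_smul_right, hpp, hpg]; ring
  have i3 : (inner ℂ ψ γ : ℂ) = s⁻¹ := by
    rw [hψ, inner_smul_left, inner_add_left, inner_smul_left, hγγ, hpg, map_inv₀, hcs]; ring
  have i4 : (inner ℂ ψ γperp : ℂ) = s⁻¹ * starRingEnd ℂ f := by
    rw [hψ, inner_smul_left, inner_add_left, inner_smul_left, horth, hpp, map_inv₀, hcs]; ring
  have i3' : (inner ℂ γ ψ : ℂ) = s⁻¹ := by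
    rw [← inner_conj_symm, i3, map_inv₀, hcs]
  have i4' : (inner ℂ γperp ψ : ℂ) = s⁻¹ * f := by
    rw [← inner_conj_symm, i4, map_mul, map_inv₀, hcs, Complex.conj_conj]
  have i5 : (inner ℂ ψ ψ : ℂ) = 1 := by
    rw [hψ, inner_smul_left, inner_smul_right, inner_add_left, inner_add_right,
      inner_add_right, inner_smul_left, inner_smul_right, inner_smul_left, inner_smul_right,
      hγγ, hpp, horth, hpg, map_inv₀, hcs]
    linear_combination (s⁻¹ * s⁻¹) * hcf + 2 * hsi
  have hφφ : (inner ℂ φ φ : ℂ) = 1 := by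
    rw [hφ, inner_smul_left, inner_smul_right, inner_add_left, inner_add_right,
      inner_add_right, inner_smul_left, inner_smul_right, inner_smul_left, inner_smul_right,
      hγγ, hpp, horth, hpg, map_inv₀, hcs]
    linear_combination (s⁻¹ * s⁻¹) * hce + 2 * hsi
  have i6 : (inner ℂ ψ φ : ℂ) = (1 - Complex.I) / 2 := by
    rw [hψ, hφ, inner_smul_left, inner_smul_right, inner_add_left, inner_add_right,
      inner_add_right, inner_smul_left, inner_smul_right, inner_smul_left, inner_smul_right,
      hγγ, hpp, horth, hpg, map_inv₀, hcs]
    linear_combination (s⁻¹ * s⁻¹) * hcfe + (1 - Complex.I) * hsi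
  have i7 : (inner ℂ φ ψ : ℂ) = (1 + Complex.I) / 2 := by
    rw [← inner_conj_symm, i6, map_div₀, map_sub, map_one, Complex.conj_I, map_ofNat]
    ring
  -- the state
  have hcompl : proj φ + proj φperp = 1 := completeness φ φperp hφφ hφpφp horth'
  have hφp1 : proj φperp = 1 - proj φ := by rw [← hcompl]; abel
  have hρ' : ρ = (p : ℂ) • (1 : Matrix (Fin 2) (Fin 2) ℂ)
      + ((1 : ℂ) - 2 * p) • proj φ := by
    rw [hρ, hφp1, smul_sub]
    push_cast
    module
  have expand : ∀ M : Matrix (Fin 2) (Fin 2) ℂ,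
      (M * ρ).trace = (p : ℂ) * M.trace + ((1 : ℂ) - 2 * p) * (M * proj φ).trace := by
    intro M
    rw [hρ', mul_add, mul_smul_comm, mul_one, mul_smul_comm, Matrix.trace_add,
      Matrix.trace_smul, Matrix.trace_smul, smul_eq_mul, smul_eq_mul]
  have hden : (proj ψ * ρ).trace = 1 / 2 := by
    rw [expand, proj_eq ψ, trace_ketbra, i5, ← proj_eq, trace_two, i6, i7]
    linear_combination (-((1 : ℂ) - 2 * p) / 4) * Complex.I_sq
  have hnum1 : (proj ψ * proj γ * ρ).trace
      = (1 + ((1 : ℂ) - 2 * p) * Complex.I) / 4 := by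
    rw [expand, trace_two, trace_three, i3, i3', i1, i7]
    linear_combination ((p : ℂ) + ((1 : ℂ) - 2 * p) * ((1 + Complex.I) / 2)) * hsi
  have hnum2 : (proj ψ * proj γperp * ρ).trace
      = (1 - ((1 : ℂ) - 2 * p) * Complex.I) / 4 := by
    rw [expand, trace_two, trace_three, i4, i4', i2, i7]
    linear_combination ((p : ℂ) * (s⁻¹ * s⁻¹)) * hcf
      + (((1 : ℂ) - 2 * p) * (s⁻¹ * s⁻¹) * ((1 + Complex.I) / 2)) * hcfe
      + ((p : ℂ) + ((1 : ℂ) - 2 * p) * (-Complex.I) * ((1 + Complex.I) / 2)) * hsi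
      + (-((1 : ℂ) - 2 * p) / 4) * Complex.I_sq
  have g1 : gweak ρ ψ (proj γ) = (1 / 2) * (1 + ((1 - 2 * p : ℝ) : ℂ) * Complex.I) := by
    unfold gweak
    rw [hnum1, hden]
    push_cast
    ring
  have g2 : gweak ρ ψ (proj γperp) = (1 / 2) * (1 - ((1 - 2 * p : ℝ) : ℂ) * Complex.I) := by
    unfold gweak
    rw [hnum2, hden]
    push_cast
    ring
  refine ⟨g1, g2, ?_⟩
  rw [g1, g2, map_mul, map_add, map_mul, map_one, Complex.conj_I, Complex.conj_ofReal,
    map_div₀, map_one, map_ofNat]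
  ring
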